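/- Let K be a field, λ, μ, k ∈ K* and n ≥ 2. If λⁿμ^{2n−1} = k^{2n−1} and λ^{n−1}μ^{2n−3} = k^{2n−3}, then λμ² = k² and λ = 1. -/
import Mathlib

/-- Key arithmetic lemma: if `λⁿμ^{2n-1} = k^{2n-1}` and `λ^{n-1}μ^{2n-3} = k^{2n-3}`
for units `λ, μ, k` and `n ≥ 2`, then `λμ² = k²` and `λ = 1`. -/
theorem stmt_15 {K : Type*} [Field K] (lam mu k : K)
    (hlam : lam ≠ 0) (hmu : mu ≠ 0) (hk : k ≠ 0) (n : ℕ) (hn : 2 ≤ n)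
    (h1 : lam ^ n * mu ^ (2 * n - 1) = k ^ (2 * n - 1))
    (h2 : lam ^ (n - 1) * mu ^ (2 * n - 3) = k ^ (2 * n - 3)) :
    lam * mu ^ 2 = k ^ 2 ∧ lam = 1 := by
  obtain ⟨m, rfl⟩ : ∃ m, n = m + 2 := ⟨n - 2, by omega⟩
  rw [show 2 * (m + 2) - 1 = 2 * m + 3 by omega] at h1
  rw [show m + 2 - 1 = m + 1 by omega, show 2 * (m + 2) - 3 = 2 * m + 1 by omega] at h2
  have hk2 : lam * mu ^ 2 = k ^ 2 := by
    have key : k ^ (2 * m + 1) * (lam * mu ^ 2) = k ^ (2 * m + 1) * k ^ 2 := by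
      calc k ^ (2 * m + 1) * (lam * mu ^ 2)
          = lam ^ (m + 2) * mu ^ (2 * m + 3) := by rw [← h2]; ring
        _ = k ^ (2 * m + 3) := h1
        _ = k ^ (2 * m + 1) * k ^ 2 := by ring
    exact mul_left_cancel₀ (pow_ne_zero _ hk) key
  have hlk : lam * mu = k := by
    have key : (lam ^ m * mu ^ (2 * m)) * (lam * mu) = (lam ^ m * mu ^ (2 * m)) * k := by
      calc (lam ^ m * mu ^ (2 * m)) * (lam * mu)
          = lam ^ (m + 1) * mu ^ (2 * m + 1) := by ring
        _ = k ^ (2 * m + 1) := h2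
        _ = (k ^ 2) ^ m * k := by ring
        _ = (lam * mu ^ 2) ^ m * k := by rw [hk2]
        _ = (lam ^ m * mu ^ (2 * m)) * k := by ring
    exact mul_left_cancel₀ (mul_ne_zero (pow_ne_zero _ hlam) (pow_ne_zero _ hmu)) key
  refine ⟨hk2, ?_⟩
  have h : lam * (lam * mu ^ 2) = 1 * (lam * mu ^ 2) := by
    calc lam * (lam * mu ^ 2) = (lam * mu) ^ 2 := by ring
      _ = k ^ 2 := by rw [hlk]
      _ = 1 * (lam * mu ^ 2) := by rw [one_mul, hk2]
  exact mul_right_cancel₀ (mul_ne_zero hlam (pow_ne_zero 2 hmu)) h
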